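/- Let G=(V,E) be a finite simple graph with V={v_1,...,v_n} and E={e_1,...,e_m}, and let G' be the graph constructed from G as described in the context. If G' has a transitive (m+5)-partition, then G has a proper 3-coloring. -/

import Mathlib

/-- `A` dominates `B` in `G`: every vertex of `B` has a neighbour in `A`. -/
def SimpleGraph.Dominates {V : Type*} (G : SimpleGraph V) (A B : Finset V) : Prop :=
  ∀ b ∈ B, ∃ a ∈ A, G.Adj a b

/-- `P : Fin k → Finset V` is a transitive `k`-partition of `G`. -/
def SimpleGraph.IsTransitivePartition {V : Type*} (G : SimpleGraph V)
    {k : ℕ} (P : Fin k → Finset V) : Prop :=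
  (∀ i, (P i).Nonempty) ∧ (∀ v : V, ∃! i, v ∈ P i) ∧
  (∀ i j : Fin k, i < j → G.Dominates (P i) (P j))

/-- The transitivity `Tr(G)`: the largest `k` admitting a transitive `k`-partition. -/
noncomputable def SimpleGraph.transitivity {V : Type*} [Fintype V] (G : SimpleGraph V) : ℕ :=
  sSup {k : ℕ | ∃ P : Fin k → Finset V, G.IsTransitivePartition P}

/-- `H` is (isomorphic to) a subgraph of `G`. -/
def ContainsSubgraph {α β : Type*} (H : SimpleGraph α) (G : SimpleGraph β) : Prop :=
  ∃ f : α → β, Function.Injective f ∧ ∀ a b, H.Adj a b → G.Adj (f a) (f b)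

/-- `H` is (isomorphic to) an induced subgraph of `G`. -/
def ContainsInduced {α β : Type*} (H : SimpleGraph α) (G : SimpleGraph β) : Prop :=
  Nonempty (H ↪g G)

/-- The complete bipartite graph `K_{t,t}`. -/
def Ktt (t : ℕ) : SimpleGraph (Fin t ⊕ Fin t) := completeBipartiteGraph (Fin t) (Fin t)

/-- `K_{t,t}` minus one edge. -/
def KttMinusE (t : ℕ) : SimpleGraph (Fin t ⊕ Fin t) :=
  (Ktt t).deleteEdges {e | ∃ h : 0 < t, e = s(Sum.inl ⟨0, h⟩, Sum.inr ⟨0, h⟩)}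

/-- A graph on `Fin m ⊕ Fin n` is a bipartite chain graph (w.r.t. the canonical
orderings of the two sides): edges only go between the two sides, and
neighbourhoods are nested along each ordering. -/
def IsBipartiteChain {m n : ℕ} (G : SimpleGraph (Fin m ⊕ Fin n)) : Prop :=
  (∀ i j : Fin m, ¬ G.Adj (Sum.inl i) (Sum.inl j)) ∧
  (∀ i j : Fin n, ¬ G.Adj (Sum.inr i) (Sum.inr j)) ∧
  (∀ i j : Fin m, i ≤ j → ∀ y : Fin n, G.Adj (Sum.inl j) (Sum.inr y) → G.Adj (Sum.inl i) (Sum.inr y)) ∧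
  (∀ i j : Fin n, i ≤ j → ∀ x : Fin m, G.Adj (Sum.inl x) (Sum.inr j) → G.Adj (Sum.inl x) (Sum.inr i))


/-- Vertices of the graph `G'` constructed from a graph `G` with `n` vertices and `m`
enumerated edges.  The `Bool` flag distinguishes the unprimed (`false`) and primed
(`true`) copies of each gadget.
* `vpath b i p` : vertex number `p` of the path `P_{v_i}` (resp. `P'_{v_i}`), where
  positions `0,1,2,3` are `x_i, w_i, v_i, z_i`;
* `epath b j p` : vertex number `p` of the path `P_{e_j}` (resp. `P'_{e_j}`);
* `spath b s p` : vertex number `p` of the special path `P_a`/`P_b`/`P_e`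
  (for `s = 0,1,2`) resp. its primed copy;
* `core b (some j)` : the vertex `e_j` of `A` (for `b = false`) resp. `e'_j` of `B`
  (for `b = true`);
* `core b none` : the vertex `e` of `A` resp. `e'` of `B`. -/
inductive GadgetVert (n m : ℕ) : Type
  | vpath : Bool → Fin n → Fin 4 → GadgetVert n m
  | epath : Bool → Fin m → Fin 4 → GadgetVert n m
  | spath : Bool → Fin 3 → Fin 4 → GadgetVert n m
  | core : Bool → Option (Fin m) → GadgetVert n m
  deriving DecidableEq, Fintype

/-- The base (asymmetric) adjacency relation of the construction, given the edge
enumeration `ends : Fin m → Fin n × Fin n` of `G`. -/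
def gadgetRel {n m : ℕ} (ends : Fin m → Fin n × Fin n) :
    GadgetVert n m → GadgetVert n m → Prop
  | .vpath b i p, .vpath b' i' p' => b = b' ∧ i = i' ∧ (p' : ℕ) = (p : ℕ) + 1
  | .epath b j p, .epath b' j' p' => b = b' ∧ j = j' ∧ (p' : ℕ) = (p : ℕ) + 1
  | .spath b s p, .spath b' s' p' => b = b' ∧ s = s' ∧ (p' : ℕ) = (p : ℕ) + 1
  | .core b _, .core b' _ => b = false ∧ b' = true
  | .vpath b i p, .core b' o =>
      b = b' ∧ p = 2 ∧ ∃ k : Fin m, o = some k ∧ ((ends k).1 = i ∨ (ends k).2 = i)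
  | .epath b j p, .core b' o => b = b' ∧ p = 2 ∧ o = some j
  | .spath b _ p, .core b' o => b = b' ∧ p = 2 ∧ o = none
  | _, _ => False

/-- The graph `G'` constructed from a graph on `Fin n` whose `m` edges are
enumerated by `ends`. -/
def gadgetGraph {n m : ℕ} (ends : Fin m → Fin n × Fin n) :
    SimpleGraph (GadgetVert n m) :=
  SimpleGraph.fromRel (gadgetRel ends)

namespace GadgetProof
open GadgetVert

variable {n m : ℕ} {ends : Fin m → Fin n × Fin n}

lemma adj_iff {x y : GadgetVert n m} :
    (gadgetGraph ends).Adj x y ↔ x ≠ y ∧ (gadgetRel ends x y ∨ gadgetRel ends y x) :=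
  SimpleGraph.fromRel_adj _ _ _

lemma adj_vpath0 {b i y} (h : (gadgetGraph ends).Adj y (.vpath b i 0)) : y = .vpath b i 1 := by
  rw [adj_iff] at h
  obtain ⟨-, h | h⟩ := h
  · cases y with
    | vpath b' i' p' =>
        simp only [gadgetRel] at h
        obtain ⟨rfl, rfl, hp⟩ := h
        exfalso; omega
    | epath b' j' p' => exact h.elim
    | spath b' s' p' => exact h.elim
    | core b' o => exact h.elim
  · cases y with
    | vpath b' i' p' =>
        simp only [gadgetRel] at h
        obtain ⟨rfl, rfl, hp⟩ := h
        rw [show p' = 1 by rw [Fin.ext_iff]; omega]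
    | epath b' j' p' => exact h.elim
    | spath b' s' p' => exact h.elim
    | core b' o =>
        simp only [gadgetRel] at h
        obtain ⟨-, hp, -⟩ := h
        exact absurd (congrArg Fin.val hp) (by omega)

lemma adj_vpath1 {b i y} (h : (gadgetGraph ends).Adj y (.vpath b i 1)) :
    y = .vpath b i 0 ∨ y = .vpath b i 2 := by
  rw [adj_iff] at h
  obtain ⟨-, h | h⟩ := h
  · cases y with
    | vpath b' i' p' =>
        simp only [gadgetRel] at h
        obtain ⟨rfl, rfl, hp⟩ := h
        left; rw [show p' = 0 by rw [Fin.ext_iff]; omega]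
    | epath b' j' p' => exact h.elim
    | spath b' s' p' => exact h.elim
    | core b' o => exact h.elim
  · cases y with
    | vpath b' i' p' =>
        simp only [gadgetRel] at h
        obtain ⟨rfl, rfl, hp⟩ := h
        right; rw [show p' = 2 by rw [Fin.ext_iff]; omega]
    | epath b' j' p' => exact h.elim
    | spath b' s' p' => exact h.elim
    | core b' o =>
        simp only [gadgetRel] at h
        obtain ⟨-, hp, -⟩ := h
        exact absurd (congrArg Fin.val hp) (by omega)

lemma adj_vpath3 {b i y} (h : (gadgetGraph ends).Adj y (.vpath b i 3)) : y = .vpath b i 2 := by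
  rw [adj_iff] at h
  obtain ⟨-, h | h⟩ := h
  · cases y with
    | vpath b' i' p' =>
        simp only [gadgetRel] at h
        obtain ⟨rfl, rfl, hp⟩ := h
        rw [show p' = 2 by rw [Fin.ext_iff]; omega]
    | epath b' j' p' => exact h.elim
    | spath b' s' p' => exact h.elim
    | core b' o => exact h.elim
  · cases y with
    | vpath b' i' p' =>
        simp only [gadgetRel] at h
        obtain ⟨rfl, rfl, hp⟩ := h
        exfalso; omega
    | epath b' j' p' => exact h.elim
    | spath b' s' p' => exact h.elim
    | core b' o =>
        simp only [gadgetRel] at h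
        obtain ⟨-, hp, -⟩ := h
        exact absurd (congrArg Fin.val hp) (by omega)

lemma adj_vpath2 {b i y} (h : (gadgetGraph ends).Adj y (.vpath b i 2)) :
    y = .vpath b i 1 ∨ y = .vpath b i 3 ∨
      ∃ k, ((ends k).1 = i ∨ (ends k).2 = i) ∧ y = .core b (some k) := by
  rw [adj_iff] at h
  obtain ⟨-, h | h⟩ := h
  · cases y with
    | vpath b' i' p' =>
        simp only [gadgetRel] at h
        obtain ⟨rfl, rfl, hp⟩ := h
        left; rw [show p' = 1 by rw [Fin.ext_iff]; omega]
    | epath b' j' p' => exact h.elim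
    | spath b' s' p' => exact h.elim
    | core b' o => exact h.elim
  · cases y with
    | vpath b' i' p' =>
        simp only [gadgetRel] at h
        obtain ⟨rfl, rfl, hp⟩ := h
        right; left; rw [show p' = 3 by rw [Fin.ext_iff]; omega]
    | epath b' j' p' => exact h.elim
    | spath b' s' p' => exact h.elim
    | core b' o =>
        simp only [gadgetRel] at h
        obtain ⟨rfl, -, k, rfl, hk⟩ := h
        exact Or.inr (Or.inr ⟨k, hk, rfl⟩)

lemma adj_epath0 {b j y} (h : (gadgetGraph ends).Adj y (.epath b j 0)) : y = .epath b j 1 := by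
  rw [adj_iff] at h
  obtain ⟨-, h | h⟩ := h
  · cases y with
    | epath b' j' p' =>
        simp only [gadgetRel] at h
        obtain ⟨rfl, rfl, hp⟩ := h
        exfalso; omega
    | vpath b' i' p' => exact h.elim
    | spath b' s' p' => exact h.elim
    | core b' o => exact h.elim
  · cases y with
    | epath b' j' p' =>
        simp only [gadgetRel] at h
        obtain ⟨rfl, rfl, hp⟩ := h
        rw [show p' = 1 by rw [Fin.ext_iff]; omega]
    | vpath b' i' p' => exact h.elim
    | spath b' s' p' => exact h.elim
    | core b' o =>
        simp only [gadgetRel] at h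
        obtain ⟨-, hp, -⟩ := h
        exact absurd (congrArg Fin.val hp) (by omega)

lemma adj_epath1 {b j y} (h : (gadgetGraph ends).Adj y (.epath b j 1)) :
    y = .epath b j 0 ∨ y = .epath b j 2 := by
  rw [adj_iff] at h
  obtain ⟨-, h | h⟩ := h
  · cases y with
    | epath b' j' p' =>
        simp only [gadgetRel] at h
        obtain ⟨rfl, rfl, hp⟩ := h
        left; rw [show p' = 0 by rw [Fin.ext_iff]; omega]
    | vpath b' i' p' => exact h.elim
    | spath b' s' p' => exact h.elim
    | core b' o => exact h.elim
  · cases y with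
    | epath b' j' p' =>
        simp only [gadgetRel] at h
        obtain ⟨rfl, rfl, hp⟩ := h
        right; rw [show p' = 2 by rw [Fin.ext_iff]; omega]
    | vpath b' i' p' => exact h.elim
    | spath b' s' p' => exact h.elim
    | core b' o =>
        simp only [gadgetRel] at h
        obtain ⟨-, hp, -⟩ := h
        exact absurd (congrArg Fin.val hp) (by omega)

lemma adj_epath3 {b j y} (h : (gadgetGraph ends).Adj y (.epath b j 3)) : y = .epath b j 2 := by
  rw [adj_iff] at h
  obtain ⟨-, h | h⟩ := h
  · cases y with
    | epath b' j' p' =>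
        simp only [gadgetRel] at h
        obtain ⟨rfl, rfl, hp⟩ := h
        rw [show p' = 2 by rw [Fin.ext_iff]; omega]
    | vpath b' i' p' => exact h.elim
    | spath b' s' p' => exact h.elim
    | core b' o => exact h.elim
  · cases y with
    | epath b' j' p' =>
        simp only [gadgetRel] at h
        obtain ⟨rfl, rfl, hp⟩ := h
        exfalso; omega
    | vpath b' i' p' => exact h.elim
    | spath b' s' p' => exact h.elim
    | core b' o =>
        simp only [gadgetRel] at h
        obtain ⟨-, hp, -⟩ := h
        exact absurd (congrArg Fin.val hp) (by omega)

lemma adj_epath2 {b j y} (h : (gadgetGraph ends).Adj y (.epath b j 2)) :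
    y = .epath b j 1 ∨ y = .epath b j 3 ∨ y = .core b (some j) := by
  rw [adj_iff] at h
  obtain ⟨-, h | h⟩ := h
  · cases y with
    | epath b' j' p' =>
        simp only [gadgetRel] at h
        obtain ⟨rfl, rfl, hp⟩ := h
        left; rw [show p' = 1 by rw [Fin.ext_iff]; omega]
    | vpath b' i' p' => exact h.elim
    | spath b' s' p' => exact h.elim
    | core b' o => exact h.elim
  · cases y with
    | epath b' j' p' =>
        simp only [gadgetRel] at h
        obtain ⟨rfl, rfl, hp⟩ := h
        right; left; rw [show p' = 3 by rw [Fin.ext_iff]; omega]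
    | vpath b' i' p' => exact h.elim
    | spath b' s' p' => exact h.elim
    | core b' o =>
        simp only [gadgetRel] at h
        obtain ⟨rfl, -, rfl⟩ := h
        exact Or.inr (Or.inr rfl)

lemma adj_spath0 {b s y} (h : (gadgetGraph ends).Adj y (.spath b s 0)) : y = .spath b s 1 := by
  rw [adj_iff] at h
  obtain ⟨-, h | h⟩ := h
  · cases y with
    | spath b' s' p' =>
        simp only [gadgetRel] at h
        obtain ⟨rfl, rfl, hp⟩ := h
        exfalso; omega
    | vpath b' i' p' => exact h.elim
    | epath b' j' p' => exact h.elim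
    | core b' o => exact h.elim
  · cases y with
    | spath b' s' p' =>
        simp only [gadgetRel] at h
        obtain ⟨rfl, rfl, hp⟩ := h
        rw [show p' = 1 by rw [Fin.ext_iff]; omega]
    | vpath b' i' p' => exact h.elim
    | epath b' j' p' => exact h.elim
    | core b' o =>
        simp only [gadgetRel] at h
        obtain ⟨-, hp, -⟩ := h
        exact absurd (congrArg Fin.val hp) (by omega)

lemma adj_spath1 {b s y} (h : (gadgetGraph ends).Adj y (.spath b s 1)) :
    y = .spath b s 0 ∨ y = .spath b s 2 := by
  rw [adj_iff] at h
  obtain ⟨-, h | h⟩ := h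
  · cases y with
    | spath b' s' p' =>
        simp only [gadgetRel] at h
        obtain ⟨rfl, rfl, hp⟩ := h
        left; rw [show p' = 0 by rw [Fin.ext_iff]; omega]
    | vpath b' i' p' => exact h.elim
    | epath b' j' p' => exact h.elim
    | core b' o => exact h.elim
  · cases y with
    | spath b' s' p' =>
        simp only [gadgetRel] at h
        obtain ⟨rfl, rfl, hp⟩ := h
        right; rw [show p' = 2 by rw [Fin.ext_iff]; omega]
    | vpath b' i' p' => exact h.elim
    | epath b' j' p' => exact h.elim
    | core b' o =>
        simp only [gadgetRel] at h
        obtain ⟨-, hp, -⟩ := h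
        exact absurd (congrArg Fin.val hp) (by omega)

lemma adj_spath3 {b s y} (h : (gadgetGraph ends).Adj y (.spath b s 3)) : y = .spath b s 2 := by
  rw [adj_iff] at h
  obtain ⟨-, h | h⟩ := h
  · cases y with
    | spath b' s' p' =>
        simp only [gadgetRel] at h
        obtain ⟨rfl, rfl, hp⟩ := h
        rw [show p' = 2 by rw [Fin.ext_iff]; omega]
    | vpath b' i' p' => exact h.elim
    | epath b' j' p' => exact h.elim
    | core b' o => exact h.elim
  · cases y with
    | spath b' s' p' =>
        simp only [gadgetRel] at h
        obtain ⟨rfl, rfl, hp⟩ := h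
        exfalso; omega
    | vpath b' i' p' => exact h.elim
    | epath b' j' p' => exact h.elim
    | core b' o =>
        simp only [gadgetRel] at h
        obtain ⟨-, hp, -⟩ := h
        exact absurd (congrArg Fin.val hp) (by omega)

lemma adj_spath2 {b s y} (h : (gadgetGraph ends).Adj y (.spath b s 2)) :
    y = .spath b s 1 ∨ y = .spath b s 3 ∨ y = .core b none := by
  rw [adj_iff] at h
  obtain ⟨-, h | h⟩ := h
  · cases y with
    | spath b' s' p' =>
        simp only [gadgetRel] at h
        obtain ⟨rfl, rfl, hp⟩ := h
        left; rw [show p' = 1 by rw [Fin.ext_iff]; omega]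
    | vpath b' i' p' => exact h.elim
    | epath b' j' p' => exact h.elim
    | core b' o => exact h.elim
  · cases y with
    | spath b' s' p' =>
        simp only [gadgetRel] at h
        obtain ⟨rfl, rfl, hp⟩ := h
        right; left; rw [show p' = 3 by rw [Fin.ext_iff]; omega]
    | vpath b' i' p' => exact h.elim
    | epath b' j' p' => exact h.elim
    | core b' o =>
        simp only [gadgetRel] at h
        obtain ⟨rfl, -, rfl⟩ := h
        exact Or.inr (Or.inr rfl)

lemma adj_core {b o y} (h : (gadgetGraph ends).Adj y (.core b o)) :
    (∃ o', y = .core (!b) o') ∨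
    (∃ i k, o = some k ∧ ((ends k).1 = i ∨ (ends k).2 = i) ∧ y = .vpath b i 2) ∨
    (∃ k, o = some k ∧ y = .epath b k 2) ∨
    (o = none ∧ ∃ s, y = .spath b s 2) := by
  rw [adj_iff] at h
  obtain ⟨-, h | h⟩ := h
  · cases y with
    | vpath b' i' p' =>
        simp only [gadgetRel] at h
        obtain ⟨rfl, rfl, k, rfl, hk⟩ := h
        exact Or.inr (Or.inl ⟨i', k, rfl, hk, rfl⟩)
    | epath b' j' p' =>
        simp only [gadgetRel] at h
        obtain ⟨rfl, rfl, rfl⟩ := h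
        exact Or.inr (Or.inr (Or.inl ⟨j', rfl, rfl⟩))
    | spath b' s' p' =>
        simp only [gadgetRel] at h
        obtain ⟨rfl, rfl, rfl⟩ := h
        exact Or.inr (Or.inr (Or.inr ⟨rfl, s', rfl⟩))
    | core b' o' =>
        simp only [gadgetRel] at h
        obtain ⟨rfl, rfl⟩ := h
        exact Or.inl ⟨o', rfl⟩
  · cases y with
    | vpath b' i' p' => exact h.elim
    | epath b' j' p' => exact h.elim
    | spath b' s' p' => exact h.elim
    | core b' o' =>
        simp only [gadgetRel] at h
        obtain ⟨rfl, rfl⟩ := h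
        exact Or.inl ⟨o', rfl⟩

lemma adj_core_core {o o' : Option (Fin m)} :
    (gadgetGraph ends).Adj (.core false o) (.core true o') := by
  rw [adj_iff]
  exact ⟨by simp, Or.inl ⟨rfl, rfl⟩⟩

end GadgetProof

namespace GadgetProof

/-- Counting: a vertex in part `j` forces `j` many distinct neighbours. -/
lemma part_le_card {V : Type*} [DecidableEq V] {K : ℕ} {G : SimpleGraph V}
    {P : Fin K → Finset V}
    (hdisj : ∀ v (i j : Fin K), v ∈ P i → v ∈ P j → i = j)
    (hdom : ∀ i j : Fin K, i < j → ∀ v ∈ P j, ∃ a ∈ P i, G.Adj a v)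
    {v : V} {j : Fin K} (hv : v ∈ P j) {S : Finset V}
    (hS : ∀ y, G.Adj y v → y ∈ S) : (j : ℕ) ≤ S.card := by
  have hex : ∀ q : ℕ, ∃ a : V, ∀ hq : q < (j : ℕ), a ∈ P ⟨q, lt_trans hq j.isLt⟩ ∧ G.Adj a v := by
    intro q
    by_cases hq : q < (j : ℕ)
    · obtain ⟨a, ha, hadj⟩ := hdom ⟨q, lt_trans hq j.isLt⟩ j (by simpa [Fin.lt_def]) v hv
      exact ⟨a, fun _ => ⟨ha, hadj⟩⟩
    · exact ⟨v, fun h => absurd h hq⟩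
  choose f hf using hex
  exact Finset.le_card_of_inj_on_range f
    (fun q hq => hS _ (hf q hq).2)
    (fun q hq r hr hfq => by
      have h1 := (hf q hq).1
      have h2 := (hf r hr).1
      rw [hfq] at h1
      have := hdisj _ _ _ h1 h2
      simpa [Fin.ext_iff] using this)

/-- Bijection lemma: if all neighbours of `v` lie in `S`, and `v` has a neighbour in
`P q` for every `q ∈ T`, with `|S| ≤ |T|`, then every element of `S` is a neighbour of
`v`, lies in a part indexed by `T`, and is the unique element of `S` in its part. -/
lemma bij_lemma {V : Type*} [DecidableEq V] {K : ℕ} {G : SimpleGraph V}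
    {P : Fin K → Finset V}
    (hdisj : ∀ v (i j : Fin K), v ∈ P i → v ∈ P j → i = j)
    {v : V} {S : Finset V} (hS : ∀ y, G.Adj y v → y ∈ S)
    {T : Finset (Fin K)} (hT : ∀ q ∈ T, ∃ a ∈ P q, G.Adj a v)
    (hcard : S.card ≤ T.card) :
    ∀ s ∈ S, G.Adj s v ∧ ∃ q ∈ T, s ∈ P q ∧ ∀ s' ∈ S, s' ∈ P q → s' = s := by
  classical
  have hex : ∀ q ∈ T, ∃ a, a ∈ P q ∧ G.Adj a v := by
    intro q hq; obtain ⟨a, ha, h⟩ := hT q hq; exact ⟨a, ha, h⟩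
  choose f hf1 hf2 using hex
  have hsurj := Finset.surj_on_of_inj_on_of_card_le f
    (fun q hq => hS _ (hf2 q hq))
    (fun q r hq hr hfe => by
      have h1 := hf1 q hq
      rw [hfe] at h1
      exact hdisj _ _ _ h1 (hf1 r hr))
    hcard
  intro s hs
  obtain ⟨q, hq, rfl⟩ := hsurj s hs
  refine ⟨hf2 q hq, q, hq, hf1 q hq, ?_⟩
  intro s' hs' hs'q
  obtain ⟨q', hq', he⟩ := hsurj s' hs'
  subst he
  have := hdisj _ _ _ hs'q (hf1 q' hq')
  subst this
  rfl

/-- pigeonhole: three distinct values cannot all lie in a 2-element set. -/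
lemma ph2 {α : Type*} {r1 r2 r3 w z : α} (h12 : r1 ≠ r2) (h13 : r1 ≠ r3) (h23 : r2 ≠ r3)
    (m1 : r1 = w ∨ r1 = z) (m2 : r2 = w ∨ r2 = z) (m3 : r3 = w ∨ r3 = z) : False := by
  rcases m1 with rfl | rfl <;> rcases m2 with rfl | rfl <;> rcases m3 with rfl | rfl <;>
    simp_all

lemma ph_pick {α : Type*} [DecidableEq α] {t0 t1 t2 : α} (w z : α)
    (h01 : t0 ≠ t1) (h02 : t0 ≠ t2) (h12 : t1 ≠ t2) :
    ∃ t, (t = t0 ∨ t = t1 ∨ t = t2) ∧ t ≠ w ∧ t ≠ z := by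
  by_cases hw0 : t0 = w
  · by_cases hz1 : t1 = z
    · exact ⟨t2, Or.inr (Or.inr rfl), by rintro rfl; exact h02 (hw0 ▸ rfl) , by rintro rfl; exact h12 (hz1 ▸ rfl)⟩
    · by_cases hw1 : t1 = w
      · exact absurd (hw0.trans hw1.symm) h01
      · exact ⟨t1, Or.inr (Or.inl rfl), hw1, hz1⟩
  · by_cases hz0 : t0 = z
    · by_cases hw1 : t1 = w
      · by_cases hz2 : t2 = z
        · exact absurd (hz0.trans hz2.symm) h02
        · by_cases hw2 : t2 = w
          · exact absurd (hw1.trans hw2.symm) h12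
          · exact ⟨t2, Or.inr (Or.inr rfl), hw2, hz2⟩
      · by_cases hz1 : t1 = z
        · exact absurd (hz0.trans hz1.symm) h01
        · exact ⟨t1, Or.inr (Or.inl rfl), hw1, hz1⟩
    · exact ⟨t0, Or.inl rfl, hw0, hz0⟩

lemma triple_pigeon {α : Type*} {c1 c2 c3 a1 a2 a3 : α}
    (h12 : c1 ≠ c2) (h13 : c1 ≠ c3) (h23 : c2 ≠ c3)
    (m1 : c1 = a1 ∨ c1 = a2 ∨ c1 = a3)
    (m2 : c2 = a1 ∨ c2 = a2 ∨ c2 = a3)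
    (m3 : c3 = a1 ∨ c3 = a2 ∨ c3 = a3) :
    a1 ≠ a2 ∧ (a1 = c1 ∨ a1 = c2 ∨ a1 = c3) ∧ (a2 = c1 ∨ a2 = c2 ∨ a2 = c3) := by
  rcases m1 with rfl | rfl | rfl <;> rcases m2 with h2 | h2 | h2 <;>
    rcases m3 with h3 | h3 | h3 <;> subst_eqs <;> try tauto

end GadgetProof

namespace GadgetProof

def flipV {n m : ℕ} : GadgetVert n m → GadgetVert n m
  | .vpath b i p => .vpath (!b) i p
  | .epath b j p => .epath (!b) j p
  | .spath b s p => .spath (!b) s p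
  | .core b o => .core (!b) o

variable {n m : ℕ} {ends : Fin m → Fin n × Fin n}

lemma flipV_invol (v : GadgetVert n m) : flipV (flipV v) = v := by
  cases v <;> simp [flipV]

lemma flipV_adj {x y : GadgetVert n m} :
    (gadgetGraph ends).Adj (flipV x) (flipV y) ↔ (gadgetGraph ends).Adj x y := by
  have hne : ∀ a b : GadgetVert n m, flipV a ≠ flipV b ↔ a ≠ b := by
    intro a b
    constructor
    · intro h he; exact h (he ▸ rfl)
    · intro h he
      exact h (by rw [← flipV_invol a, he, flipV_invol])
  rw [adj_iff, adj_iff, hne]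
  refine and_congr_right fun _ => ?_
  have key : ∀ a b : GadgetVert n m,
      (gadgetRel ends (flipV a) (flipV b) ∨ gadgetRel ends (flipV b) (flipV a)) ↔
      (gadgetRel ends a b ∨ gadgetRel ends b a) := by
    intro a b
    cases a <;> cases b <;>
      simp only [flipV, gadgetRel] <;>
      (try rfl) <;>
      (try simp) <;>
      constructor <;> rintro (h | h) <;> simp_all <;> tauto
  exact key x y

end GadgetProof

namespace GadgetProof

variable {n m : ℕ} {ends : Fin m → Fin n × Fin n}

lemma mem_flip_image {v : GadgetVert n m} {s : Finset (GadgetVert n m)} :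
    v ∈ s.image flipV ↔ flipV v ∈ s := by
  rw [Finset.mem_image]
  constructor
  · rintro ⟨a, ha, rfl⟩; rwa [flipV_invol]
  · intro h; exact ⟨flipV v, h, flipV_invol v⟩

lemma flip_partition {K : ℕ} {P : Fin K → Finset (GadgetVert n m)}
    (hP : (gadgetGraph ends).IsTransitivePartition P) :
    (gadgetGraph ends).IsTransitivePartition (fun i => (P i).image flipV) := by
  obtain ⟨hne, hex, hdom⟩ := hP
  refine ⟨fun i => ((hne i).image flipV), fun v => ?_, fun i j hij b hb => ?_⟩
  · obtain ⟨i, hi, hu⟩ := hex (flipV v)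
    refine ⟨i, mem_flip_image.2 hi, fun j hj => hu j (mem_flip_image.1 hj)⟩
  · obtain ⟨a, ha, hadj⟩ := hdom i j hij (flipV b) (mem_flip_image.1 hb)
    refine ⟨flipV a, mem_flip_image.2 (by rwa [flipV_invol]), ?_⟩
    have : (gadgetGraph ends).Adj (flipV a) (flipV (flipV b)) := flipV_adj.2 hadj
    rwa [flipV_invol] at this

/-- Whatever sits in the top part must be a core vertex. -/
lemma exists_core_top (hm : 1 ≤ m) {P : Fin (m + 5) → Finset (GadgetVert n m)}
    (hP : (gadgetGraph ends).IsTransitivePartition P) :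
    ∃ (b : Bool) (o : Option (Fin m)), GadgetVert.core b o ∈ P ⟨m + 4, by omega⟩ := by
  classical
  obtain ⟨hne, hex, hdom⟩ := hP
  have hdisj : ∀ v (i j : Fin (m+5)), v ∈ P i → v ∈ P j → i = j :=
    fun v i j hi hj => ((hex v).unique hi hj)
  obtain ⟨u, hu⟩ := hne ⟨m + 4, by omega⟩
  have hcard : ∀ (S : Finset (GadgetVert n m)),
      (∀ y, (gadgetGraph ends).Adj y u → y ∈ S) → m + 4 ≤ S.card := by
    intro S hS
    exact part_le_card hdisj hdom hu hS
  cases u with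
  | vpath b i p =>
      exfalso
      have h4 := p.isLt
      interval_cases hp : (p : ℕ)
      · have hp' : p = 0 := by rw [Fin.ext_iff]; omega
        subst hp'
        have := hcard {.vpath b i 1} (fun y hy => by simp [adj_vpath0 hy])
        simp only [Finset.card_singleton] at this; omega
      · have hp' : p = 1 := by rw [Fin.ext_iff]; omega
        subst hp'
        have := hcard {.vpath b i 0, .vpath b i 2} (fun y hy => by
          rcases adj_vpath1 hy with rfl | rfl <;> simp)
        have h2 : ({GadgetVert.vpath b i 0, GadgetVert.vpath b i 2} :
            Finset (GadgetVert n m)).card ≤ 2 := Finset.card_insert_le _ _ |>.trans (by simp)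
        omega
      · have hp' : p = 2 := by rw [Fin.ext_iff]; omega
        subst hp'
        have := hcard (insert (.vpath b i 1) (insert (.vpath b i 3)
            ((Finset.univ : Finset (Fin m)).image fun k => (.core b (some k) : GadgetVert n m))))
          (fun y hy => by
            rcases adj_vpath2 hy with rfl | rfl | ⟨k, hk, rfl⟩
            · simp
            · simp
            · simp only [Finset.mem_insert]
              refine Or.inr (Or.inr (Finset.mem_image.2 ⟨k, Finset.mem_univ k, rfl⟩)))
        have h2 : (insert (GadgetVert.vpath b i 1) (insert (GadgetVert.vpath b i 3)
            ((Finset.univ : Finset (Fin m)).image fun k =>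
              (.core b (some k) : GadgetVert n m)))).card ≤ m + 2 := by
          refine (Finset.card_insert_le _ _).trans ?_
          have := (Finset.card_insert_le (GadgetVert.vpath b i 3)
            ((Finset.univ : Finset (Fin m)).image fun k => (.core b (some k) : GadgetVert n m)))
          have him := Finset.card_image_le (s := (Finset.univ : Finset (Fin m)))
            (f := fun k => (.core b (some k) : GadgetVert n m))
          simp only [Finset.card_univ, Fintype.card_fin] at him
          omega
        omega
      · have hp' : p = 3 := by rw [Fin.ext_iff]; omega
        subst hp'
        have := hcard {.vpath b i 2} (fun y hy => by simp [adj_vpath3 hy])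
        simp only [Finset.card_singleton] at this; omega
  | epath b j p =>
      exfalso
      have h4 := p.isLt
      interval_cases hp : (p : ℕ)
      · have hp' : p = 0 := by rw [Fin.ext_iff]; omega
        subst hp'
        have := hcard {.epath b j 1} (fun y hy => by simp [adj_epath0 hy])
        simp only [Finset.card_singleton] at this; omega
      · have hp' : p = 1 := by rw [Fin.ext_iff]; omega
        subst hp'
        have := hcard {.epath b j 0, .epath b j 2} (fun y hy => by
          rcases adj_epath1 hy with rfl | rfl <;> simp)
        have h2 : ({GadgetVert.epath b j 0, GadgetVert.epath b j 2} :
            Finset (GadgetVert n m)).card ≤ 2 := Finset.card_insert_le _ _ |>.trans (by simp)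
        omega
      · have hp' : p = 2 := by rw [Fin.ext_iff]; omega
        subst hp'
        have := hcard {.epath b j 1, .epath b j 3, .core b (some j)} (fun y hy => by
          rcases adj_epath2 hy with rfl | rfl | rfl <;> simp)
        have h2 : ({GadgetVert.epath b j 1, GadgetVert.epath b j 3, GadgetVert.core b (some j)} :
            Finset (GadgetVert n m)).card ≤ 3 :=
          (Finset.card_insert_le _ _).trans (by
            have := Finset.card_insert_le (GadgetVert.epath b j 3)
              ({GadgetVert.core b (some j)} : Finset (GadgetVert n m))
            simp only [Finset.card_singleton] at this ⊢; omega)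
        omega
      · have hp' : p = 3 := by rw [Fin.ext_iff]; omega
        subst hp'
        have := hcard {.epath b j 2} (fun y hy => by simp [adj_epath3 hy])
        simp only [Finset.card_singleton] at this; omega
  | spath b s p =>
      exfalso
      have h4 := p.isLt
      interval_cases hp : (p : ℕ)
      · have hp' : p = 0 := by rw [Fin.ext_iff]; omega
        subst hp'
        have := hcard {.spath b s 1} (fun y hy => by simp [adj_spath0 hy])
        simp only [Finset.card_singleton] at this; omega
      · have hp' : p = 1 := by rw [Fin.ext_iff]; omega
        subst hp'
        have := hcard {.spath b s 0, .spath b s 2} (fun y hy => by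
          rcases adj_spath1 hy with rfl | rfl <;> simp)
        have h2 : ({GadgetVert.spath b s 0, GadgetVert.spath b s 2} :
            Finset (GadgetVert n m)).card ≤ 2 := Finset.card_insert_le _ _ |>.trans (by simp)
        omega
      · have hp' : p = 2 := by rw [Fin.ext_iff]; omega
        subst hp'
        have := hcard {.spath b s 1, .spath b s 3, .core b none} (fun y hy => by
          rcases adj_spath2 hy with rfl | rfl | rfl <;> simp)
        have h2 : ({GadgetVert.spath b s 1, GadgetVert.spath b s 3, GadgetVert.core b none} :
            Finset (GadgetVert n m)).card ≤ 3 :=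
          (Finset.card_insert_le _ _).trans (by
            have := Finset.card_insert_le (GadgetVert.spath b s 3)
              ({GadgetVert.core b none} : Finset (GadgetVert n m))
            simp only [Finset.card_singleton] at this ⊢; omega)
        omega
      · have hp' : p = 3 := by rw [Fin.ext_iff]; omega
        subst hp'
        have := hcard {.spath b s 2} (fun y hy => by simp [adj_spath3 hy])
        simp only [Finset.card_singleton] at this; omega
  | core b o => exact ⟨b, o, hu⟩

end GadgetProof

namespace GadgetProof

/-- The (at most three) gadget-path neighbours of a core vertex. -/
def GadOf {n m : ℕ} (ends : Fin m → Fin n × Fin n) (c : Bool) (oc : Option (Fin m))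
    (y : GadgetVert n m) : Prop :=
  (∃ x k, oc = some k ∧ ((ends k).1 = x ∨ (ends k).2 = x) ∧ y = .vpath c x 2) ∨
  (∃ k, oc = some k ∧ y = .epath c k 2) ∨ (∃ s : Fin 3, oc = none ∧ y = .spath c s 2)

variable {n m : ℕ} {ends : Fin m → Fin n × Fin n}

lemma max3 {α : Type*} [LinearOrder α] (a b c : α) :
    ∃ x, (x = a ∨ x = b ∨ x = c) ∧ a ≤ x ∧ b ≤ x ∧ c ≤ x := by
  refine ⟨max a (max b c), ?_, le_max_left _ _,
    (le_max_left b c).trans (le_max_right _ _), (le_max_right b c).trans (le_max_right _ _)⟩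
  rcases max_choice a (max b c) with h | h
  · exact Or.inl h
  · rcases max_choice b c with h' | h'
    · exact Or.inr (Or.inl (h.trans h'))
    · exact Or.inr (Or.inr (h.trans h'))

lemma core_step_aux {P : Fin (m + 5) → Finset (GadgetVert n m)}
    (hdisj : ∀ v (i j : Fin (m + 5)), v ∈ P i → v ∈ P j → i = j)
    {pt : GadgetVert n m → Fin (m + 5)} (hpt : ∀ v, v ∈ P (pt v))
    (c : Bool) (oc : Option (Fin m)) {y1 y2 y3 : GadgetVert n m}
    (hy12 : y1 ≠ y2) (hy13 : y1 ≠ y3) (hy23 : y2 ≠ y3)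
    (hyc1 : ∀ o', y1 ≠ .core (!c) o') (hyc2 : ∀ o', y2 ≠ .core (!c) o')
    (hyc3 : ∀ o', y3 ≠ .core (!c) o')
    (hSchar : ∀ y, (gadgetGraph ends).Adj y (.core c oc) →
      (∃ o', y = .core (!c) o') ∨ y = y1 ∨ y = y2 ∨ y = y3)
    (T : Finset (Fin (m + 5)))
    (hT : ∀ q ∈ T, ∃ a ∈ P q, (gadgetGraph ends).Adj a (.core c oc))
    (hTcard : T.card = m + 4) :
    pt y1 ≠ pt y2 ∧ pt y1 ≠ pt y3 ∧ pt y2 ≠ pt y3 ∧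
      (∀ o', pt (.core (!c) o') ∈ T) ∧
      (∀ o1 o2, pt (.core (!c) o1) = pt (.core (!c) o2) → o1 = o2) ∧
      (∀ (o' : Option (Fin m)) (i : Fin (m + 5)),
        (i = pt y1 ∨ i = pt y2 ∨ i = pt y3) → pt (.core (!c) o') ≠ i) ∧
      (∀ q ∈ T, (∀ o', pt (.core (!c) o') ≠ q) → q = pt y1 ∨ q = pt y2 ∨ q = pt y3) := by
  classical
  have hptu : ∀ (v : GadgetVert n m) i, v ∈ P i → i = pt v :=
    fun v i hi => hdisj v i (pt v) hi (hpt v)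
  set S : Finset (GadgetVert n m) :=
    ((Finset.univ : Finset (Option (Fin m))).image fun o' => (.core (!c) o' : GadgetVert n m)) ∪
      {y1, y2, y3} with hSdef
  have hyS1 : y1 ∈ S := by simp [hSdef]
  have hyS2 : y2 ∈ S := by simp [hSdef]
  have hyS3 : y3 ∈ S := by simp [hSdef]
  have hcS : ∀ o', (.core (!c) o' : GadgetVert n m) ∈ S := fun o' =>
    Finset.mem_union_left _ (Finset.mem_image.2 ⟨o', Finset.mem_univ _, rfl⟩)
  have hS : ∀ y, (gadgetGraph ends).Adj y (.core c oc) → y ∈ S := by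
    intro y hy
    rcases hSchar y hy with ⟨o', rfl⟩ | rfl | rfl | rfl
    · exact hcS o'
    · exact hyS1
    · exact hyS2
    · exact hyS3
  have hScard : S.card = m + 4 := by
    rw [hSdef, Finset.card_union_of_disjoint, Finset.card_image_of_injective _
        (fun o1 o2 h => by injection h), Finset.card_univ]
    · have h3 : ({y1, y2, y3} : Finset (GadgetVert n m)).card = 3 := by
        rw [Finset.card_insert_of_notMem (by simp [hy12, hy13]),
          Finset.card_insert_of_notMem (by simp [hy23]), Finset.card_singleton]
      rw [h3]
      simp
    · rw [Finset.disjoint_left]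
      rintro a ha hb
      obtain ⟨o', -, rfl⟩ := Finset.mem_image.1 ha
      simp only [Finset.mem_insert, Finset.mem_singleton] at hb
      rcases hb with rfl | rfl | rfl
      · exact hyc1 o' rfl
      · exact hyc2 o' rfl
      · exact hyc3 o' rfl
  have hbij := bij_lemma hdisj hS hT (le_of_eq (hScard.trans hTcard.symm))
  have hmemu : ∀ s, s ∈ S → ∃ q ∈ T, s ∈ P q ∧ ∀ s' ∈ S, s' ∈ P q → s' = s :=
    fun s hs => (hbij s hs).2
  have hptT : ∀ s, s ∈ S → pt s ∈ T ∧ ∀ s' ∈ S, s' ∈ P (pt s) → s' = s := by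
    intro s hs
    obtain ⟨q, hqT, hmem, huniq⟩ := hmemu s hs
    obtain rfl := (hptu s q hmem)
    exact ⟨hqT, huniq⟩
  refine ⟨?_, ?_, ?_, ?_, ?_, ?_, ?_⟩
  · intro h
    exact hy12 (((hptT y1 hyS1).2 y2 hyS2 (h ▸ hpt y2)).symm)
  · intro h
    exact hy13 (((hptT y1 hyS1).2 y3 hyS3 (h ▸ hpt y3)).symm)
  · intro h
    exact hy23 (((hptT y2 hyS2).2 y3 hyS3 (h ▸ hpt y3)).symm)
  · intro o'
    exact (hptT _ (hcS o')).1
  · intro o1 o2 h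
    have := (hptT _ (hcS o1)).2 (.core (!c) o2) (hcS o2) (h ▸ hpt _)
    injection this with _ h2
    exact h2.symm
  · rintro o' i (rfl | rfl | rfl) h
    · exact hyc1 o' ((hptT y1 hyS1).2 _ (hcS o') (h ▸ hpt _)).symm
    · exact hyc2 o' ((hptT y2 hyS2).2 _ (hcS o') (h ▸ hpt _)).symm
    · exact hyc3 o' ((hptT y3 hyS3).2 _ (hcS o') (h ▸ hpt _)).symm
  · intro q hqT hfree
    obtain ⟨a, ha, hadj⟩ := hT q hqT
    rcases hSchar a hadj with ⟨o', rfl⟩ | rfl | rfl | rfl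
    · exact absurd (hptu _ _ ha).symm (hfree o')
    · exact Or.inl (hptu _ _ ha)
    · exact Or.inr (Or.inl (hptu _ _ ha))
    · exact Or.inr (Or.inr (hptu _ _ ha))

lemma core_step (hir : ∀ k : Fin m, (ends k).1 ≠ (ends k).2)
    {P : Fin (m + 5) → Finset (GadgetVert n m)}
    (hdisj : ∀ v (i j : Fin (m + 5)), v ∈ P i → v ∈ P j → i = j)
    {pt : GadgetVert n m → Fin (m + 5)} (hpt : ∀ v, v ∈ P (pt v))
    (c : Bool) (oc : Option (Fin m)) (T : Finset (Fin (m + 5)))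
    (hT : ∀ q ∈ T, ∃ a ∈ P q, (gadgetGraph ends).Adj a (.core c oc))
    (hTcard : T.card = m + 4) :
    ∃ y1 y2 y3 : GadgetVert n m,
      GadOf ends c oc y1 ∧ GadOf ends c oc y2 ∧ GadOf ends c oc y3 ∧
      (pt y1 ≠ pt y2 ∧ pt y1 ≠ pt y3 ∧ pt y2 ≠ pt y3) ∧
      (∀ o', pt (.core (!c) o') ∈ T) ∧
      (∀ o1 o2, pt (.core (!c) o1) = pt (.core (!c) o2) → o1 = o2) ∧
      (∀ (o' : Option (Fin m)) (i : Fin (m + 5)),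
        (i = pt y1 ∨ i = pt y2 ∨ i = pt y3) → pt (.core (!c) o') ≠ i) ∧
      (∀ q ∈ T, (∀ o', pt (.core (!c) o') ≠ q) → q = pt y1 ∨ q = pt y2 ∨ q = pt y3) := by
  cases oc with
  | some k =>
      have haux := core_step_aux (ends := ends) hdisj hpt c (some k)
        (y1 := .vpath c (ends k).1 2) (y2 := .vpath c (ends k).2 2) (y3 := .epath c k 2)
        (by simp [hir k]) (by simp) (by simp)
        (fun o' h => by cases c <;> exact (by simp at h))
        (fun o' h => by cases c <;> exact (by simp at h))
        (fun o' h => by cases c <;> exact (by simp at h))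
        (fun y hy => by
          rcases adj_core hy with ⟨o', rfl⟩ | ⟨x, k0, hk0, hx, rfl⟩ | ⟨k0, hk0, rfl⟩ |
            ⟨hnone, s, rfl⟩
          · exact Or.inl ⟨o', rfl⟩
          · injection hk0 with hk0
            subst hk0
            rcases hx with hx | hx
            · exact Or.inr (Or.inl (by rw [hx]))
            · exact Or.inr (Or.inr (Or.inl (by rw [hx])))
          · injection hk0 with hk0
            subst hk0
            exact Or.inr (Or.inr (Or.inr rfl))
          · exact absurd hnone (by simp))
        T hT hTcard
      exact ⟨_, _, _, Or.inl ⟨(ends k).1, k, rfl, Or.inl rfl, rfl⟩,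
        Or.inl ⟨(ends k).2, k, rfl, Or.inr rfl, rfl⟩, Or.inr (Or.inl ⟨k, rfl, rfl⟩),
        ⟨haux.1, haux.2.1, haux.2.2.1⟩, haux.2.2.2.1, haux.2.2.2.2.1, haux.2.2.2.2.2.1,
        haux.2.2.2.2.2.2⟩
  | none =>
      have haux := core_step_aux (ends := ends) hdisj hpt c none
        (y1 := .spath c 0 2) (y2 := .spath c 1 2) (y3 := .spath c 2 2)
        (by simp) (by simp [Fin.ext_iff]) (by simp [Fin.ext_iff])
        (fun o' h => by cases c <;> exact (by simp at h))
        (fun o' h => by cases c <;> exact (by simp at h))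
        (fun o' h => by cases c <;> exact (by simp at h))
        (fun y hy => by
          rcases adj_core hy with ⟨o', rfl⟩ | ⟨x, k0, hk0, hx, rfl⟩ | ⟨k0, hk0, rfl⟩ |
            ⟨hnone, s, rfl⟩
          · exact Or.inl ⟨o', rfl⟩
          · exact absurd hk0 (by simp)
          · exact absurd hk0 (by simp)
          · fin_cases s
            · exact Or.inr (Or.inl rfl)
            · exact Or.inr (Or.inr (Or.inl rfl))
            · exact Or.inr (Or.inr (Or.inr rfl)))
        T hT hTcard
      exact ⟨_, _, _, Or.inr (Or.inr ⟨0, rfl, rfl⟩), Or.inr (Or.inr ⟨1, rfl, rfl⟩),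
        Or.inr (Or.inr ⟨2, rfl, rfl⟩),
        ⟨haux.1, haux.2.1, haux.2.2.1⟩, haux.2.2.2.1, haux.2.2.2.2.1, haux.2.2.2.2.2.1,
        haux.2.2.2.2.2.2⟩

end GadgetProof

namespace GadgetProof

lemma main {n m : ℕ} {ends : Fin m → Fin n × Fin n} (hm : 1 ≤ m)
    (hinj : Function.Injective fun j : Fin m => s((ends j).1, (ends j).2))
    (hir : ∀ k : Fin m, (ends k).1 ≠ (ends k).2)
    {P : Fin (m + 5) → Finset (GadgetVert n m)}
    (hP : (gadgetGraph ends).IsTransitivePartition P)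
    {o : Option (Fin m)}
    (hu : GadgetVert.core false o ∈ P ⟨m + 4, by omega⟩) :
    ∃ g : Fin n → Fin 3, ∀ k : Fin m, g (ends k).1 ≠ g (ends k).2 := by
  classical
  obtain ⟨hne, hex, hdom⟩ := hP
  have hdisj : ∀ (v : GadgetVert n m) (i j : Fin (m + 5)), v ∈ P i → v ∈ P j → i = j :=
    fun v i j hi hj => (hex v).unique hi hj
  choose pt hpt using fun v => (hex v).exists
  have hptu : ∀ (v : GadgetVert n m) i, v ∈ P i → i = pt v :=
    fun v i hi => hdisj v i (pt v) hi (hpt v)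
  have hdom' : ∀ (v : GadgetVert n m) (q : Fin (m + 5)), q < pt v →
      ∃ a ∈ P q, (gadgetGraph ends).Adj a v :=
    fun v q hq => hdom q (pt v) hq v (hpt v)
  have top : Fin (m + 5) := ⟨m + 4, by omega⟩
  -- part bounds for gadget path vertices
  have hb_w : ∀ (b : Bool) (i : Fin n), (pt (.vpath b i 1) : ℕ) ≤ 2 := by
    intro b i
    have := part_le_card hdisj hdom (hpt (.vpath b i 1))
      (S := {GadgetVert.vpath b i 0, GadgetVert.vpath b i 2})
      (fun y hy => by rcases adj_vpath1 hy with rfl | rfl <;> simp)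
    have h2 : ({GadgetVert.vpath b i 0, GadgetVert.vpath b i 2} :
        Finset (GadgetVert n m)).card ≤ 2 := (Finset.card_insert_le _ _).trans (by simp)
    omega
  have hb_z : ∀ (b : Bool) (i : Fin n), (pt (.vpath b i 3) : ℕ) ≤ 1 := by
    intro b i
    have := part_le_card hdisj hdom (hpt (.vpath b i 3))
      (S := {GadgetVert.vpath b i 2}) (fun y hy => by simp [adj_vpath3 hy])
    simp only [Finset.card_singleton] at this
    omega
  have hb_v : ∀ (b : Bool) (i : Fin n), (pt (.vpath b i 2) : ℕ) ≤ m + 2 := by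
    intro b i
    have := part_le_card hdisj hdom (hpt (.vpath b i 2))
      (S := insert (.vpath b i 1) (insert (.vpath b i 3)
        ((Finset.univ : Finset (Fin m)).image fun k => (.core b (some k) : GadgetVert n m))))
      (fun y hy => by
        rcases adj_vpath2 hy with rfl | rfl | ⟨k, hk, rfl⟩
        · simp
        · simp
        · simp only [Finset.mem_insert]
          exact Or.inr (Or.inr (Finset.mem_image.2 ⟨k, Finset.mem_univ k, rfl⟩)))
    have h2 : (insert (GadgetVert.vpath b i 1) (insert (GadgetVert.vpath b i 3)
        ((Finset.univ : Finset (Fin m)).image fun k =>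
          (.core b (some k) : GadgetVert n m)))).card ≤ m + 2 := by
      refine (Finset.card_insert_le _ _).trans ?_
      have h1 := Finset.card_insert_le (GadgetVert.vpath b i 3)
        ((Finset.univ : Finset (Fin m)).image fun k => (.core b (some k) : GadgetVert n m))
      have him := Finset.card_image_le (s := (Finset.univ : Finset (Fin m)))
        (f := fun k => (.core b (some k) : GadgetVert n m))
      simp only [Finset.card_univ, Fintype.card_fin] at him
      omega
    omega
  have hb_ve : ∀ (b : Bool) (j : Fin m), (pt (.epath b j 2) : ℕ) ≤ 3 := by
    intro b j
    have := part_le_card hdisj hdom (hpt (.epath b j 2))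
      (S := {GadgetVert.epath b j 1, GadgetVert.epath b j 3, GadgetVert.core b (some j)})
      (fun y hy => by rcases adj_epath2 hy with rfl | rfl | rfl <;> simp)
    have h2 : ({GadgetVert.epath b j 1, GadgetVert.epath b j 3, GadgetVert.core b (some j)} :
        Finset (GadgetVert n m)).card ≤ 3 :=
      (Finset.card_insert_le _ _).trans (by
        have := Finset.card_insert_le (GadgetVert.epath b j 3)
          ({GadgetVert.core b (some j)} : Finset (GadgetVert n m))
        simp only [Finset.card_singleton] at this ⊢
        omega)
    omega
  have hb_vs : ∀ (b : Bool) (s : Fin 3), (pt (.spath b s 2) : ℕ) ≤ 3 := by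
    intro b s
    have := part_le_card hdisj hdom (hpt (.spath b s 2))
      (S := {GadgetVert.spath b s 1, GadgetVert.spath b s 3, GadgetVert.core b none})
      (fun y hy => by rcases adj_spath2 hy with rfl | rfl | rfl <;> simp)
    have h2 : ({GadgetVert.spath b s 1, GadgetVert.spath b s 3, GadgetVert.core b none} :
        Finset (GadgetVert n m)).card ≤ 3 :=
      (Finset.card_insert_le _ _).trans (by
        have := Finset.card_insert_le (GadgetVert.spath b s 3)
          ({GadgetVert.core b none} : Finset (GadgetVert n m))
        simp only [Finset.card_singleton] at this ⊢
        omega)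
    omega
  have hptu_top : pt (GadgetVert.core false o) = ⟨m + 4, by omega⟩ := (hptu _ _ hu).symm
  -- u-side bijection
  obtain ⟨y1, y2, y3, hga1, hga2, hga3, ⟨hq12, hq13, hq23⟩, hBinT, hBinj, hBfreeQ, hQcover⟩ :=
    core_step hir hdisj hpt false o (Finset.univ.erase ⟨m + 4, by omega⟩)
      (fun q hq => by
        refine hdom' (GadgetVert.core false o) q ?_
        rw [hptu_top]
        have hqne := Finset.ne_of_mem_erase hq
        rw [Fin.lt_def]
        have := q.isLt
        have hne' : (q : ℕ) ≠ m + 4 := fun h => hqne (Fin.ext h)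
        simp only []
        omega)
      (by
        rw [Finset.card_erase_of_mem (Finset.mem_univ _), Finset.card_univ, Fintype.card_fin]
        omega)
  simp only [Bool.not_false] at hBinT hBinj hBfreeQ hQcover
  -- part bound for the gadget neighbours
  have hGadBound : ∀ y, GadOf ends false o y → (pt y : ℕ) ≤ m + 2 := by
    rintro y (⟨x, k, hk, hx, rfl⟩ | ⟨k, hk, rfl⟩ | ⟨s, hk, rfl⟩)
    · exact hb_v false x
    · exact (hb_ve false k).trans (by omega)
    · exact (hb_vs false s).trans (by omega)
  -- find b* in part m+3
  obtain ⟨ob, hob⟩ : ∃ ob, pt (GadgetVert.core true ob) = ⟨m + 3, by omega⟩ := by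
    by_contra hc
    push_neg at hc
    have hsec := hQcover ⟨m + 3, by omega⟩
      (Finset.mem_erase.2 ⟨by intro h; have := congrArg Fin.val h; simp at this, Finset.mem_univ _⟩)
      (fun o' h => hc o' h)
    rcases hsec with h | h | h
    · have := hGadBound y1 hga1
      rw [← h] at this
      simp only [] at this
      omega
    · have := hGadBound y2 hga2
      rw [← h] at this
      simp only [] at this
      omega
    · have := hGadBound y3 hga3
      rw [← h] at this
      simp only [] at this
      omega
  -- b*-side bijection
  obtain ⟨z1, z2, z3, hgb1, hgb2, hgb3, ⟨hr12, hr13, hr23⟩, hAinT, hAinj, hAfreeR, hRcover⟩ :=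
    core_step hir hdisj hpt true ob (Finset.univ.erase ⟨m + 3, by omega⟩)
      (fun q hq => by
        have hqne := Finset.ne_of_mem_erase hq
        by_cases hqtop : q = ⟨m + 4, by omega⟩
        · subst hqtop
          exact ⟨GadgetVert.core false o, hu, adj_core_core⟩
        · refine hdom' (GadgetVert.core true ob) q ?_
          rw [hob, Fin.lt_def]
          have := q.isLt
          have hne1 : (q : ℕ) ≠ m + 3 := fun h => hqne (Fin.ext h)
          have hne2 : (q : ℕ) ≠ m + 4 := fun h => hqtop (Fin.ext h)
          simp only []
          omega)
      (by
        rw [Finset.card_erase_of_mem (Finset.mem_univ _), Finset.card_univ, Fintype.card_fin]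
        omega)
  simp only [Bool.not_true] at hAinT hAinj hAfreeR hRcover
  have hGadBound' : ∀ y, GadOf ends true ob y → (pt y : ℕ) ≤ m + 2 := by
    rintro y (⟨x, k, hk, hx, rfl⟩ | ⟨k, hk, rfl⟩ | ⟨s, hk, rfl⟩)
    · exact hb_v true x
    · exact (hb_ve true k).trans (by omega)
    · exact (hb_vs true s).trans (by omega)
  -- the domination lemma for gadget path centres
  have lemV : ∀ (c : Bool) (gv w z : GadgetVert n m),
      (∀ a, (gadgetGraph ends).Adj a gv → a = w ∨ a = z ∨ ∃ o', a = .core c o') →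
      ∀ t : Fin (m + 5), t < pt gv → (∀ o', pt (.core c o') ≠ t) →
        t = pt w ∨ t = pt z := by
    intro c gv w z hchar t hlt hfree
    obtain ⟨a, ha, hadj⟩ := hdom' gv t hlt
    rcases hchar a hadj with rfl | rfl | ⟨o', rfl⟩
    · exact Or.inl (hptu _ _ ha)
    · exact Or.inr (hptu _ _ ha)
    · exact absurd (hptu _ _ ha).symm (hfree o')
  -- adjacency characterisation of gadget path centres
  have charOf : ∀ (c : Bool) (y : GadgetVert n m), GadOf ends c o y ∨ GadOf ends c ob y →
      ∃ w z, (∀ a, (gadgetGraph ends).Adj a y → a = w ∨ a = z ∨ ∃ o', a = .core c o') := by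
    rintro c y ((⟨x, k, hk, hx, rfl⟩ | ⟨k, hk, rfl⟩ | ⟨s, hk, rfl⟩) |
      (⟨x, k, hk, hx, rfl⟩ | ⟨k, hk, rfl⟩ | ⟨s, hk, rfl⟩))
    · exact ⟨.vpath c x 1, .vpath c x 3, fun a ha => by
        rcases adj_vpath2 ha with rfl | rfl | ⟨k', hk', rfl⟩
        · exact Or.inl rfl
        · exact Or.inr (Or.inl rfl)
        · exact Or.inr (Or.inr ⟨some k', rfl⟩)⟩
    · exact ⟨.epath c k 1, .epath c k 3, fun a ha => by
        rcases adj_epath2 ha with rfl | rfl | rfl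
        · exact Or.inl rfl
        · exact Or.inr (Or.inl rfl)
        · exact Or.inr (Or.inr ⟨some k, rfl⟩)⟩
    · exact ⟨.spath c s 1, .spath c s 3, fun a ha => by
        rcases adj_spath2 ha with rfl | rfl | rfl
        · exact Or.inl rfl
        · exact Or.inr (Or.inl rfl)
        · exact Or.inr (Or.inr ⟨none, rfl⟩)⟩
    · exact ⟨.vpath c x 1, .vpath c x 3, fun a ha => by
        rcases adj_vpath2 ha with rfl | rfl | ⟨k', hk', rfl⟩
        · exact Or.inl rfl
        · exact Or.inr (Or.inl rfl)
        · exact Or.inr (Or.inr ⟨some k', rfl⟩)⟩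
    · exact ⟨.epath c k 1, .epath c k 3, fun a ha => by
        rcases adj_epath2 ha with rfl | rfl | rfl
        · exact Or.inl rfl
        · exact Or.inr (Or.inl rfl)
        · exact Or.inr (Or.inr ⟨some k, rfl⟩)⟩
    · exact ⟨.spath c s 1, .spath c s 3, fun a ha => by
        rcases adj_spath2 ha with rfl | rfl | rfl
        · exact Or.inl rfl
        · exact Or.inr (Or.inl rfl)
        · exact Or.inr (Or.inr ⟨none, rfl⟩)⟩
  have notAll : ∀ y, GadOf ends false o y →
      ¬(pt z1 < pt y ∧ pt z2 < pt y ∧ pt z3 < pt y) := by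
    intro y hy ⟨h1, h2, h3⟩
    obtain ⟨w, z, hchar⟩ := charOf false y (Or.inl hy)
    exact ph2 hr12 hr13 hr23
      (lemV false y w z hchar (pt z1) h1 (fun o' => hAfreeR o' _ (Or.inl rfl)))
      (lemV false y w z hchar (pt z2) h2 (fun o' => hAfreeR o' _ (Or.inr (Or.inl rfl))))
      (lemV false y w z hchar (pt z3) h3 (fun o' => hAfreeR o' _ (Or.inr (Or.inr rfl))))
  have notAll' : ∀ y, GadOf ends true ob y →
      ¬(pt y1 < pt y ∧ pt y2 < pt y ∧ pt y3 < pt y) := by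
    intro y hy ⟨h1, h2, h3⟩
    obtain ⟨w, z, hchar⟩ := charOf true y (Or.inr hy)
    exact ph2 hq12 hq13 hq23
      (lemV true y w z hchar (pt y1) h1 (fun o' => hBfreeQ o' _ (Or.inl rfl)))
      (lemV true y w z hchar (pt y2) h2 (fun o' => hBfreeQ o' _ (Or.inr (Or.inl rfl))))
      (lemV true y w z hchar (pt y3) h3 (fun o' => hBfreeQ o' _ (Or.inr (Or.inr rfl))))
  obtain ⟨qM, hqM_eq, hq1le, hq2le, hq3le⟩ := max3 (pt y1) (pt y2) (pt y3)
  obtain ⟨rM, hrM_eq, hr1le, hr2le, hr3le⟩ := max3 (pt z1) (pt z2) (pt z3)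
  have hqMrM : qM = rM := by
    have h1 : qM ≤ rM := by
      by_contra hc
      push_neg at hc
      have hall : pt z1 < qM ∧ pt z2 < qM ∧ pt z3 < qM :=
        ⟨lt_of_le_of_lt hr1le hc, lt_of_le_of_lt hr2le hc, lt_of_le_of_lt hr3le hc⟩
      rcases hqM_eq with e | e | e
      · exact notAll y1 hga1 (e ▸ hall)
      · exact notAll y2 hga2 (e ▸ hall)
      · exact notAll y3 hga3 (e ▸ hall)
    have h2 : rM ≤ qM := by
      by_contra hc
      push_neg at hc
      have hall : pt y1 < rM ∧ pt y2 < rM ∧ pt y3 < rM :=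
        ⟨lt_of_le_of_lt hq1le hc, lt_of_le_of_lt hq2le hc, lt_of_le_of_lt hq3le hc⟩
      rcases hrM_eq with e | e | e
      · exact notAll' z1 hgb1 (e ▸ hall)
      · exact notAll' z2 hgb2 (e ▸ hall)
      · exact notAll' z3 hgb3 (e ▸ hall)
    exact le_antisymm h1 h2
  have vne : ∀ {a b : Fin (m + 5)}, a ≠ b → (a : ℕ) ≠ (b : ℕ) := fun h h' => h (Fin.ext h')
  -- hosts of low B-free parts on the neighbourhood of an edge core
  have edge_hosts : ∀ k : Fin m,
      (pt y1 < pt (.core false (some k)) ∧ pt y2 < pt (.core false (some k)) ∧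
        pt y3 < pt (.core false (some k))) →
      ∀ i : Fin (m + 5), (i = pt y1 ∨ i = pt y2 ∨ i = pt y3) →
        (i = pt (.vpath false (ends k).1 2) ∨ i = pt (.vpath false (ends k).2 2) ∨
          i = pt (.epath false k 2)) := by
    intro k hlt i hi
    have hilt : i < pt (.core false (some k)) := by
      rcases hi with rfl | rfl | rfl
      · exact hlt.1
      · exact hlt.2.1
      · exact hlt.2.2
    obtain ⟨a, ha, hadj⟩ := hdom' _ i hilt
    rcases adj_core hadj with ⟨o', rfl⟩ | ⟨x, k0, hk0, hx, rfl⟩ | ⟨k0, hk0, rfl⟩ | ⟨hnone, -⟩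
    · exact absurd (hptu _ _ ha).symm (hBfreeQ o' i hi)
    · injection hk0 with hk0
      subst hk0
      rcases hx with hx | hx
      · rw [hx]
        exact Or.inl (hptu _ _ ha)
      · rw [hx]
        exact Or.inr (Or.inl (hptu _ _ ha))
    · injection hk0 with hk0
      subst hk0
      exact Or.inr (Or.inr (hptu _ _ ha))
    · exact absurd hnone (by simp)
  have hedge : (∀ k : Fin m, pt y1 < pt (.core false (some k)) ∧
      pt y2 < pt (.core false (some k)) ∧ pt y3 < pt (.core false (some k))) →
      ∀ k : Fin m,
        pt (.vpath false (ends k).1 2) ≠ pt (.vpath false (ends k).2 2) ∧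
        (pt (.vpath false (ends k).1 2) = pt y1 ∨ pt (.vpath false (ends k).1 2) = pt y2 ∨
          pt (.vpath false (ends k).1 2) = pt y3) ∧
        (pt (.vpath false (ends k).2 2) = pt y1 ∨ pt (.vpath false (ends k).2 2) = pt y2 ∨
          pt (.vpath false (ends k).2 2) = pt y3) := by
    intro hall k
    exact triple_pigeon hq12 hq13 hq23
      (edge_hosts k (hall k) (pt y1) (Or.inl rfl))
      (edge_hosts k (hall k) (pt y2) (Or.inr (Or.inl rfl)))
      (edge_hosts k (hall k) (pt y3) (Or.inr (Or.inr rfl)))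
  have buildCol : (∀ k : Fin m,
      pt (.vpath false (ends k).1 2) ≠ pt (.vpath false (ends k).2 2) ∧
      (pt (.vpath false (ends k).1 2) = pt y1 ∨ pt (.vpath false (ends k).1 2) = pt y2 ∨
        pt (.vpath false (ends k).1 2) = pt y3) ∧
      (pt (.vpath false (ends k).2 2) = pt y1 ∨ pt (.vpath false (ends k).2 2) = pt y2 ∨
        pt (.vpath false (ends k).2 2) = pt y3)) →
      ∃ g : Fin n → Fin 3, ∀ k : Fin m, g (ends k).1 ≠ g (ends k).2 := by
    intro h
    refine ⟨fun i => if pt (.vpath false i 2) = pt y1 then 0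
      else if pt (.vpath false i 2) = pt y2 then 1 else 2, fun k => ?_⟩
    obtain ⟨hnedge, h1, h2⟩ := h k
    rcases h1 with e1 | e1 | e1 <;> rcases h2 with e2 | e2 | e2 <;>
      first
        | exact absurd (e1.trans e2.symm) hnedge
        | (simp only [e1, e2, if_pos rfl, if_neg (Ne.symm hq12), if_neg (Ne.symm hq13),
             if_neg (Ne.symm hq23), if_neg hq12, if_neg hq13, if_neg hq23]
           decide)
  -- case analysis on the maximal B-free part
  rcases Nat.lt_or_ge (qM : ℕ) 3 with hM2 | hM3
  · -- all three B-free parts have index < 3, every edge core is above them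
    have hall : ∀ k : Fin m, pt y1 < pt (.core false (some k)) ∧
        pt y2 < pt (.core false (some k)) ∧ pt y3 < pt (.core false (some k)) := by
      intro k
      have h3 : 3 ≤ (pt (.core false (some k)) : ℕ) := by
        by_contra hc
        push_neg at hc
        have e1 := vne (hAfreeR (some k) (pt z1) (Or.inl rfl))
        have e2 := vne (hAfreeR (some k) (pt z2) (Or.inr (Or.inl rfl)))
        have e3 := vne (hAfreeR (some k) (pt z3) (Or.inr (Or.inr rfl)))
        have d12 := vne hr12
        have d13 := vne hr13
        have d23 := vne hr23
        have b1 : (pt z1 : ℕ) ≤ (rM : ℕ) := hr1le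
        have b2 : (pt z2 : ℕ) ≤ (rM : ℕ) := hr2le
        have b3 : (pt z3 : ℕ) ≤ (rM : ℕ) := hr3le
        have hrMv : (rM : ℕ) < 3 := by rw [← hqMrM]; omega
        omega
      rw [Fin.lt_def, Fin.lt_def, Fin.lt_def]
      have l1 : (pt y1 : ℕ) ≤ (qM : ℕ) := hq1le
      have l2 : (pt y2 : ℕ) ≤ (qM : ℕ) := hq2le
      have l3 : (pt y3 : ℕ) ≤ (qM : ℕ) := hq3le
      omega
    exact buildCol (hedge hall)
  · rcases Nat.lt_or_ge (qM : ℕ) 4 with hM3' | hM4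
    · -- qM has index 3
      by_cases hlow : ∃ k0 : Fin m, (pt (.core false (some k0)) : ℕ) ≤ 3
      · obtain ⟨k0, hk0low⟩ := hlow
        have hqMv : (qM : ℕ) = 3 := by omega
        have hrMv : (rM : ℕ) = 3 := by rw [← hqMrM]; exact hqMv
        have huniq_low : ∀ k : Fin m, (pt (.core false (some k)) : ℕ) ≤ 3 → k = k0 := by
          intro k hk
          have heq : pt (.core false (some k)) = pt (.core false (some k0)) := by
            rw [Fin.ext_iff]
            have e1 := vne (hAfreeR (some k) (pt z1) (Or.inl rfl))
            have e2 := vne (hAfreeR (some k) (pt z2) (Or.inr (Or.inl rfl)))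
            have e3 := vne (hAfreeR (some k) (pt z3) (Or.inr (Or.inr rfl)))
            have f1 := vne (hAfreeR (some k0) (pt z1) (Or.inl rfl))
            have f2 := vne (hAfreeR (some k0) (pt z2) (Or.inr (Or.inl rfl)))
            have f3 := vne (hAfreeR (some k0) (pt z3) (Or.inr (Or.inr rfl)))
            have d12 := vne hr12
            have d13 := vne hr13
            have d23 := vne hr23
            have b1 : (pt z1 : ℕ) ≤ (rM : ℕ) := hr1le
            have b2 : (pt z2 : ℕ) ≤ (rM : ℕ) := hr2le
            have b3 : (pt z3 : ℕ) ≤ (rM : ℕ) := hr3le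
            omega
          have := hAinj _ _ heq
          exact Option.some.inj this
        have hP01 : (⟨0, by omega⟩ : Fin (m + 5)) ≠ ⟨1, by omega⟩ := by
          intro h; have := congrArg Fin.val h; simp at this
        have hP02 : (⟨0, by omega⟩ : Fin (m + 5)) ≠ ⟨2, by omega⟩ := by
          intro h; have := congrArg Fin.val h; simp at this
        have hP12 : (⟨1, by omega⟩ : Fin (m + 5)) ≠ ⟨2, by omega⟩ := by
          intro h; have := congrArg Fin.val h; simp at this
        have key : ∀ (k : Fin m), 4 ≤ (pt (.core false (some k)) : ℕ) →
            ∀ x : Fin n, qM = pt (.vpath false x 2) → (ends k0).1 = x ∨ (ends k0).2 = x := by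
          intro k htk x hvx
          obtain ⟨t, ht_mem, htw, htz⟩ := ph_pick (α := Fin (m + 5))
            (t0 := ⟨0, by omega⟩) (t1 := ⟨1, by omega⟩) (t2 := ⟨2, by omega⟩)
            (pt (.vpath false x 1)) (pt (.vpath false x 3)) hP01 hP02 hP12
          have htv : (t : ℕ) < 3 := by rcases ht_mem with rfl | rfl | rfl <;> simp
          obtain ⟨a, ha, hadj⟩ := hdom' (.vpath false x 2) t
            (by rw [← hvx, Fin.lt_def]; omega)
          rcases adj_vpath2 hadj with rfl | rfl | ⟨l, hl, rfl⟩
          · exact absurd (hptu _ _ ha) htw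
          · exact absurd (hptu _ _ ha) htz
          · have hlk0 : l = k0 := by
              refine huniq_low l ?_
              have h1 := hptu _ _ ha
              rw [← h1]
              omega
            subst hlk0
            exact hl
        have hend : ∀ k : Fin m, k ≠ k0 →
            ((ends k).1 = (ends k0).1 ∨ (ends k).1 = (ends k0).2) ∨
            ((ends k).2 = (ends k0).1 ∨ (ends k).2 = (ends k0).2) := by
          intro k hkk0
          have htk : 4 ≤ (pt (.core false (some k)) : ℕ) := by
            by_contra hc
            push_neg at hc
            exact hkk0 (huniq_low k (by omega))
          have hallk : pt y1 < pt (.core false (some k)) ∧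
              pt y2 < pt (.core false (some k)) ∧ pt y3 < pt (.core false (some k)) := by
            rw [Fin.lt_def, Fin.lt_def, Fin.lt_def]
            have l1 : (pt y1 : ℕ) ≤ (qM : ℕ) := hq1le
            have l2 : (pt y2 : ℕ) ≤ (qM : ℕ) := hq2le
            have l3 : (pt y3 : ℕ) ≤ (qM : ℕ) := hq3le
            omega
          rcases edge_hosts k hallk qM hqM_eq with hv | hv | hv
          · exact Or.inl ((key k htk _ hv).imp Eq.symm Eq.symm)
          · exact Or.inr ((key k htk _ hv).imp Eq.symm Eq.symm)
          · exfalso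
            have hin : ∀ t : Fin (m + 5), (t : ℕ) < 3 →
                t = pt (.epath false k 1) ∨ t = pt (.epath false k 3) := by
              intro t ht
              obtain ⟨a, ha, hadj⟩ := hdom' (.epath false k 2) t
                (by rw [← hv, Fin.lt_def]; omega)
              rcases adj_epath2 hadj with rfl | rfl | rfl
              · exact Or.inl (hptu _ _ ha)
              · exact Or.inr (hptu _ _ ha)
              · exfalso
                have h1 := hptu _ _ ha
                rw [← h1] at htk
                omega
            exact ph2 hP01 hP02 hP12
              (hin ⟨0, by omega⟩ (by simp)) (hin ⟨1, by omega⟩ (by simp))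
              (hin ⟨2, by omega⟩ (by simp))
        refine ⟨fun i => if i = (ends k0).1 then 0 else if i = (ends k0).2 then 1 else 2,
          fun k => ?_⟩
        by_cases hk : k = k0
        · subst hk
          simp only [if_pos rfl, if_neg (Ne.symm (hir k)), Ne.symm (hir k)]
          simp [hir k]
        · have h2 : s((ends k).1, (ends k).2) ≠ s((ends k0).1, (ends k0).2) :=
            fun hs => hk (hinj hs)
          rcases hend k hk with (h | h) | (h | h)
          · have hb1 : (ends k).2 ≠ (ends k0).1 := fun hb => hir k (h.trans hb.symm)
            have hb2 : (ends k).2 ≠ (ends k0).2 := fun hb => h2 (by rw [h, hb])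
            simp only [if_pos h, if_neg hb1, if_neg hb2]
            decide
          · have hb0 : (ends k).1 ≠ (ends k0).1 := fun hb => hir k0 (hb.symm.trans h)
            have hb1 : (ends k).2 ≠ (ends k0).1 :=
              fun hb => h2 (Sym2.eq_iff.mpr (Or.inr ⟨h, hb⟩))
            have hb2 : (ends k).2 ≠ (ends k0).2 := fun hb => hir k (h.trans hb.symm)
            simp only [if_neg hb0, if_pos h, if_neg hb1, if_neg hb2]
            decide
          · have hb0 : (ends k).1 ≠ (ends k0).1 := fun hb => hir k (hb.trans h.symm)
            have hb1 : (ends k).1 ≠ (ends k0).2 :=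
              fun hb => h2 (Sym2.eq_iff.mpr (Or.inr ⟨hb, h⟩))
            simp only [if_neg hb0, if_neg hb1, if_pos h]
            decide
          · have hb0 : (ends k).1 ≠ (ends k0).1 :=
              fun hb => h2 (Sym2.eq_iff.mpr (Or.inl ⟨hb, h⟩))
            have hb1 : (ends k).1 ≠ (ends k0).2 := fun hb => hir k (hb.trans h.symm)
            have hb2 : (ends k).2 ≠ (ends k0).1 := fun hb => hir k0 (hb.symm.trans h)
            simp only [if_neg hb0, if_neg hb1, if_neg hb2, if_pos h]
            decide
      · push_neg at hlow
        have hall : ∀ k : Fin m, pt y1 < pt (.core false (some k)) ∧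
            pt y2 < pt (.core false (some k)) ∧ pt y3 < pt (.core false (some k)) := by
          intro k
          have h4 := hlow k
          rw [Fin.lt_def, Fin.lt_def, Fin.lt_def]
          have l1 : (pt y1 : ℕ) ≤ (qM : ℕ) := hq1le
          have l2 : (pt y2 : ℕ) ≤ (qM : ℕ) := hq2le
          have l3 : (pt y3 : ℕ) ≤ (qM : ℕ) := hq3le
          omega
        exact buildCol (hedge hall)
    · -- qM ≥ 4 : impossible
      exfalso
      obtain ⟨x, kstar, hks, hxe, hyx⟩ :
          ∃ x kk, o = some kk ∧ ((ends kk).1 = x ∨ (ends kk).2 = x) ∧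
            qM = pt (.vpath false x 2) := by
        have hex' : ∃ y, GadOf ends false o y ∧ qM = pt y := by
          rcases hqM_eq with e | e | e
          · exact ⟨y1, hga1, e⟩
          · exact ⟨y2, hga2, e⟩
          · exact ⟨y3, hga3, e⟩
        obtain ⟨y, hy, he⟩ := hex'
        rcases hy with ⟨x, kk, hk, hx, rfl⟩ | ⟨kk, hk, rfl⟩ | ⟨ss, hk, rfl⟩
        · exact ⟨x, kk, hk, hx, he⟩
        · rw [he] at hM4
          have := hb_ve false kk
          omega
        · rw [he] at hM4
          have := hb_vs false ss
          omega
      have hqMB : ∀ o', pt (.core true o') ≠ qM := fun o' => hBfreeQ o' qM hqM_eq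
      have hqMz : qM = pt z1 ∨ qM = pt z2 ∨ qM = pt z3 := by rw [hqMrM]; exact hrM_eq
      have hqMA : ∀ o', pt (.core false o') ≠ qM := fun o' => hAfreeR o' qM hqMz
      have charx : ∀ a, (gadgetGraph ends).Adj a (.vpath false x 2) →
          a = .vpath false x 1 ∨ a = .vpath false x 3 ∨ ∃ o', a = .core false o' :=
        fun a ha => by
          rcases adj_vpath2 ha with rfl | rfl | ⟨k', hk', rfl⟩
          · exact Or.inl rfl
          · exact Or.inr (Or.inl rfl)
          · exact Or.inr (Or.inr ⟨some k', rfl⟩)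
      rcases lt_trichotomy (pt (.core false none)) qM with hlt | heq | hgt
      · by_cases hwz : pt (.core false none) = pt (.vpath false x 1) ∨
            pt (.core false none) = pt (.vpath false x 3)
        · have hrj : ∀ r : Fin (m + 5), (r = pt z1 ∨ r = pt z2 ∨ r = pt z3) → r ≠ qM →
              (r = pt (.vpath false x 1) ∨ r = pt (.vpath false x 3)) := by
            intro r hr hrne
            have hrle : r ≤ qM := by
              rw [hqMrM]
              rcases hr with rfl | rfl | rfl
              · exact hr1le
              · exact hr2le
              · exact hr3le
            have hrlt : r < pt (.vpath false x 2) := by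
              rw [← hyx]
              exact lt_of_le_of_ne hrle hrne
            exact lemV false _ _ _ charx r hrlt (fun o' => hAfreeR o' r hr)
          rcases hqMz with f | f | f
          · exact ph2
              (fun h => hAfreeR none (pt z2) (Or.inr (Or.inl rfl)) h)
              (fun h => hAfreeR none (pt z3) (Or.inr (Or.inr rfl)) h)
              hr23 hwz
              (hrj (pt z2) (Or.inr (Or.inl rfl)) (fun h => hr12 (h.trans f).symm))
              (hrj (pt z3) (Or.inr (Or.inr rfl)) (fun h => hr13 (h.trans f).symm))
          · exact ph2
              (fun h => hAfreeR none (pt z1) (Or.inl rfl) h)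
              (fun h => hAfreeR none (pt z3) (Or.inr (Or.inr rfl)) h)
              hr13 hwz
              (hrj (pt z1) (Or.inl rfl) (fun h => hr12 (f.symm.trans h.symm).symm))
              (hrj (pt z3) (Or.inr (Or.inr rfl)) (fun h => hr23 (h.trans f).symm))
          · exact ph2
              (fun h => hAfreeR none (pt z1) (Or.inl rfl) h)
              (fun h => hAfreeR none (pt z2) (Or.inr (Or.inl rfl)) h)
              hr12 hwz
              (hrj (pt z1) (Or.inl rfl) (fun h => hr13 (f.symm.trans h.symm).symm))
              (hrj (pt z2) (Or.inr (Or.inl rfl)) (fun h => hr23 (f.symm.trans h.symm).symm))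
        · push_neg at hwz
          obtain ⟨hw, hz⟩ := hwz
          obtain ⟨a, ha, hadj⟩ := hdom' (.vpath false x 2) (pt (.core false none))
            (by rw [← hyx]; exact hlt)
          rcases adj_vpath2 hadj with rfl | rfl | ⟨l, hl, rfl⟩
          · exact hw (hptu _ _ ha)
          · exact hz (hptu _ _ ha)
          · have h1 := hptu _ _ ha
            have h2 := hAinj _ _ h1
            exact absurd h2 (by simp)
      · exact hqMA none heq
      · obtain ⟨a, ha, hadj⟩ := hdom' (.core false none) qM hgt
        rcases adj_core hadj with ⟨o', rfl⟩ | ⟨x0, k0, hk0, hx0, rfl⟩ | ⟨k0, hk0, rfl⟩ |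
            ⟨-, ss, rfl⟩
        · exact hqMB o' (hptu _ _ ha).symm
        · exact absurd hk0 (by simp)
        · exact absurd hk0 (by simp)
        · have h1 := hptu _ _ ha
          have := hb_vs false ss
          rw [h1] at hM4
          omega

end GadgetProof

/-- If the constructed graph `G'` has a transitive `(m+5)`-partition, then `G`
(a graph on `n` vertices whose edge set is exactly enumerated, without repetition,
by `ends : Fin m → Fin n × Fin n`) has a proper 3-coloring. -/
theorem coloring_of_gadget_transitive {n m : ℕ} (G : SimpleGraph (Fin n))
    (ends : Fin m → Fin n × Fin n)
    (hends : ∀ a b : Fin n, G.Adj a b ↔ ∃ j : Fin m, s(a, b) = s((ends j).1, (ends j).2))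
    (hinj : Function.Injective fun j : Fin m => s((ends j).1, (ends j).2))
    (hpart : ∃ P : Fin (m + 5) → Finset (GadgetVert n m),
      (gadgetGraph ends).IsTransitivePartition P) :
    ∃ g : Fin n → Fin 3, ∀ a b : Fin n, G.Adj a b → g a ≠ g b := by
  classical
  rcases Nat.eq_zero_or_pos m with hm0 | hm
  · refine ⟨fun _ => 0, fun a b hab => ?_⟩
    obtain ⟨j, -⟩ := (hends a b).mp hab
    subst hm0
    exact j.elim0
  · have hir : ∀ k : Fin m, (ends k).1 ≠ (ends k).2 := by
      intro k hk
      have : G.Adj (ends k).1 (ends k).1 := (hends _ _).mpr ⟨k, by rw [← hk]⟩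
      exact G.loopless.irrefl _ this
    obtain ⟨P, hP⟩ := hpart
    obtain ⟨b, o, hu⟩ := GadgetProof.exists_core_top hm hP
    have hcol : ∃ g : Fin n → Fin 3, ∀ k : Fin m, g (ends k).1 ≠ g (ends k).2 := by
      cases b
      · exact GadgetProof.main hm hinj hir hP hu
      · have hP' := GadgetProof.flip_partition hP
        exact GadgetProof.main hm hinj hir hP' (o := o)
          (GadgetProof.mem_flip_image.2 hu)
    obtain ⟨g, hg⟩ := hcol
    refine ⟨g, fun a b hab => ?_⟩
    obtain ⟨j, hj⟩ := (hends a b).mp hab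
    rcases Sym2.eq_iff.mp hj with ⟨h1, h2⟩ | ⟨h1, h2⟩
    · rw [h1, h2]; exact hg j
    · rw [h1, h2]; exact (hg j).symm
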